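/- Let a = (a_1, ..., a_k) be a vector of positive integers with k > 1. Then there exists a unique pair of complementary strictly increasing sequences (A_n)_{n≥1} and (B_n)_{n≥1} of positive integers (every positive integer lies in exactly one of the two ranges) satisfying A_n = Σ_{j=1}^k a_j · B_{(n-1)k+j} for all n ≥ 1. -/
import Mathlib

open Finset

namespace Stmt2Aux

variable (k : ℕ) (a : Fin k → ℕ)

/-- the linear form applied to a block of `g`. -/
def S (g : ℕ → ℕ) (n : ℕ) : ℕ := ∑ j : Fin k, a j * g ((n - 1) * k + (j : ℕ) + 1)

/-- candidate predicate at stage `i`. -/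
def P (g : ℕ → ℕ) (i m : ℕ) : Prop :=
  1 ≤ m ∧ (∀ j, 1 ≤ j → j < i → g j ≠ m) ∧ (∀ n, 1 ≤ n → n * k < i → S k a g n ≠ m)

lemma P_ex (g : ℕ → ℕ) (i : ℕ) : ∃ m, P k a g i m := by
  refine ⟨1 + (∑ j ∈ range i, g j) + (∑ n ∈ range i, S k a g n), ⟨by omega, ?_, ?_⟩⟩
  · intro j _ hj
    have : g j ≤ ∑ j ∈ range i, g j :=
      Finset.single_le_sum (fun _ _ => Nat.zero_le _) (mem_range.2 hj)
    omega
  · intro n hn hnk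
    rcases Nat.eq_zero_or_pos k with hk0 | hk0
    · subst hk0
      have : S 0 a g n = 0 := by simp [S]
      omega
    · have hni : n < i := lt_of_le_of_lt (Nat.le_mul_of_pos_right n hk0) hnk
      have : S k a g n ≤ ∑ n ∈ range i, S k a g n :=
        Finset.single_le_sum (fun _ _ => Nat.zero_le _) (mem_range.2 hni)
      omega

noncomputable def chooseB (g : ℕ → ℕ) (i : ℕ) : ℕ :=
  @Nat.find (P k a g i) (Classical.decPred _) (P_ex k a g i)

lemma chooseB_spec (g : ℕ → ℕ) (i : ℕ) : P k a g i (chooseB k a g i) :=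
  @Nat.find_spec (P k a g i) (Classical.decPred _) (P_ex k a g i)

lemma chooseB_min (g : ℕ → ℕ) (i m : ℕ) (hm : P k a g i m) : chooseB k a g i ≤ m :=
  @Nat.find_min' (P k a g i) (Classical.decPred _) (P_ex k a g i) m hm

noncomputable def Bf : ℕ → ℕ → ℕ
  | 0 => fun _ => 0
  | (i+1) => fun j => if j = i + 1 then chooseB k a (Bf i) (i + 1) else Bf i j

noncomputable def B (i : ℕ) : ℕ := Bf k a i i

noncomputable def A (n : ℕ) : ℕ := S k a (B k a) n

lemma Bf_stable : ∀ i' i j, i ≤ i' → j ≤ i → Bf k a i' j = Bf k a i j := by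
  intro i'
  induction i' with
  | zero =>
    intro i j hi hj
    have : i = 0 := by omega
    subst this; rfl
  | succ i' ih =>
    intro i j hi hj
    rcases Nat.eq_or_lt_of_le hi with h | h
    · rw [h]
    · have hii : i ≤ i' := by omega
      rw [show Bf k a (i'+1) j = Bf k a i' j from if_neg (by omega), ih i j hii hj]

lemma B_eq_Bf (i j : ℕ) (hj : j ≤ i) : B k a j = Bf k a i j :=
  (Bf_stable k a i j j hj le_rfl).symm

lemma idx_le (n : ℕ) (hn : 1 ≤ n) (j : Fin k) : (n - 1) * k + (j : ℕ) + 1 ≤ n * k := by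
  have h1 : (j : ℕ) + 1 ≤ k := j.2
  have h2 : (n - 1) * k + k = n * k := by
    conv_rhs => rw [← Nat.succ_pred_eq_of_pos hn]
    rw [Nat.succ_mul]
    rfl
  omega

lemma S_congr (g g' : ℕ → ℕ) (n : ℕ) (hn : 1 ≤ n)
    (h : ∀ i, 1 ≤ i → i ≤ n * k → g i = g' i) : S k a g n = S k a g' n := by
  unfold S
  refine Finset.sum_congr rfl fun j _ => ?_
  rw [h _ (by omega) (idx_le k n hn j)]

lemma B_succ (i : ℕ) : B k a (i + 1) = chooseB k a (Bf k a i) (i + 1) := by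
  show Bf k a (i+1) (i+1) = _
  rw [Bf]
  simp

lemma B_P (i : ℕ) (hi : 1 ≤ i) :
    1 ≤ B k a i ∧ (∀ j, 1 ≤ j → j < i → B k a j ≠ B k a i) ∧
      (∀ n, 1 ≤ n → n * k < i → A k a n ≠ B k a i) := by
  obtain ⟨i, rfl⟩ : ∃ i', i = i' + 1 := ⟨i - 1, by omega⟩
  rw [B_succ]
  obtain ⟨h1, h2, h3⟩ := chooseB_spec k a (Bf k a i) (i + 1)
  refine ⟨h1, fun j hj hji => ?_, fun n hn hnk => ?_⟩
  · rw [B_eq_Bf k a i j (by omega)]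
    exact h2 j hj hji
  · have : A k a n = S k a (Bf k a i) n := by
      refine S_congr k a _ _ n hn fun i' hi1 hi2 => B_eq_Bf k a i i' (by omega)
    rw [this]
    exact h3 n hn hnk

lemma B_min (i m : ℕ) (hi : 1 ≤ i) (h1 : 1 ≤ m) (h2 : ∀ j, 1 ≤ j → j < i → B k a j ≠ m)
    (h3 : ∀ n, 1 ≤ n → n * k < i → A k a n ≠ m) : B k a i ≤ m := by
  obtain ⟨i, rfl⟩ : ∃ i', i = i' + 1 := ⟨i - 1, by omega⟩
  rw [B_succ]
  refine chooseB_min k a (Bf k a i) (i + 1) m ⟨h1, fun j hj hji => ?_, fun n hn hnk => ?_⟩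
  · rw [← B_eq_Bf k a i j (by omega)]
    exact h2 j hj hji
  · have : S k a (Bf k a i) n = A k a n := by
      refine (S_congr k a _ _ n hn fun i' hi1 hi2 => B_eq_Bf k a i i' (by omega)).symm
    rw [this]
    exact h3 n hn hnk

lemma B_pos (i : ℕ) (hi : 1 ≤ i) : 1 ≤ B k a i := (B_P k a i hi).1

lemma B_lt_succ (i : ℕ) (hi : 1 ≤ i) : B k a i < B k a (i + 1) := by
  obtain ⟨h1, h2, h3⟩ := B_P k a (i + 1) (by omega)
  have hle : B k a i ≤ B k a (i + 1) := by
    obtain ⟨g1, g2, g3⟩ := B_P k a i hi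
    exact B_min k a i _ hi h1 (fun j hj hji => h2 j hj (by omega))
      (fun n hn hnk => h3 n hn (by omega))
  exact lt_of_le_of_ne hle (h2 i hi (by omega))

lemma B_mono : ∀ i j, 1 ≤ i → i < j → B k a i < B k a j := by
  intro i j hi hij
  induction j with
  | zero => omega
  | succ j ih =>
    rcases Nat.lt_or_ge i j with h | h
    · exact (ih h).trans (B_lt_succ k a j (by omega))
    · have : i = j := by omega
      subst this
      exact B_lt_succ k a i hi

lemma B_strictMonoOn : StrictMonoOn (B k a) (Set.Ici 1) := by
  intro i hi j _ hij
  exact B_mono k a i j hi hij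

lemma B_le_mono (i j : ℕ) (hi : 1 ≤ i) (hij : i ≤ j) : B k a i ≤ B k a j := by
  rcases Nat.eq_or_lt_of_le hij with h | h
  · rw [h]
  · exact (B_mono k a i j hi h).le

lemma le_B (i : ℕ) (hi : 1 ≤ i) : i ≤ B k a i := by
  induction i with
  | zero => omega
  | succ i ih =>
    rcases Nat.eq_zero_or_pos i with h | h
    · subst h; exact B_pos k a 1 le_rfl
    · have := B_lt_succ k a i h
      have := ih h
      omega

variable (hk : 1 < k) (ha : ∀ j, 0 < a j)

include hk ha in
lemma S_gt (g : ℕ → ℕ) (hg : ∀ i, 1 ≤ i → 1 ≤ g i) (n : ℕ) (hn : 1 ≤ n) :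
    g (n * k) < S k a g n := by
  have hk0 : 0 < k := by omega
  set j0 : Fin k := ⟨0, hk0⟩
  set j1 : Fin k := ⟨k - 1, by omega⟩
  have hne : j0 ≠ j1 := by
    simp only [j0, j1, Fin.ne_iff_vne]
    omega
  have hsub : ({j0, j1} : Finset (Fin k)) ⊆ univ := subset_univ _
  have hsum : (∑ x ∈ ({j0, j1} : Finset (Fin k)), a x * g ((n-1)*k + (x:ℕ) + 1))
      ≤ S k a g n := Finset.sum_le_sum_of_subset hsub
  rw [Finset.sum_pair hne] at hsum
  have hj1 : (n-1)*k + (j1:ℕ) + 1 = n * k := by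
    have h2 : (n - 1) * k + k = n * k := by
      conv_rhs => rw [← Nat.succ_pred_eq_of_pos hn]
      rw [Nat.succ_mul]
      rfl
    simp only [j1]
    omega
  rw [hj1] at hsum
  have h0 : 1 ≤ a j0 * g ((n-1)*k + (j0:ℕ) + 1) :=
    Nat.one_le_iff_ne_zero.2 (Nat.mul_ne_zero (by have := ha j0; omega)
      (by have := hg ((n-1)*k + (j0:ℕ) + 1) (by omega); omega))
  have h1 : g (n * k) ≤ a j1 * g (n * k) :=
    Nat.le_mul_of_pos_left _ (ha j1)
  omega

include hk ha in
lemma B_lt_A (n : ℕ) (hn : 1 ≤ n) : B k a (n * k) < A k a n :=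
  S_gt k a hk ha (B k a) (B_pos k a) n hn

include hk ha in
lemma A_pos (n : ℕ) (hn : 1 ≤ n) : 1 ≤ A k a n := by
  have h1 : 1 ≤ n * k := by
    have := Nat.le_mul_of_pos_left k hn
    omega
  exact le_trans (B_pos k a (n * k) h1) (B_lt_A k a hk ha n hn).le

include hk ha in
lemma A_lt_succ (n : ℕ) (hn : 1 ≤ n) : A k a n < A k a (n + 1) := by
  unfold A S
  have hne : (univ : Finset (Fin k)).Nonempty := ⟨⟨0, by omega⟩, mem_univ _⟩
  refine Finset.sum_lt_sum_of_nonempty hne fun j _ => ?_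
  refine Nat.mul_lt_mul_of_pos_left ?_ (ha j)
  refine B_mono k a _ _ (by omega) ?_
  have h2 : (n - 1) * k + k = n * k := by
    conv_rhs => rw [← Nat.succ_pred_eq_of_pos hn]
    rw [Nat.succ_mul]
    rfl
  have h3 : k ≤ n * k := Nat.le_mul_of_pos_left k hn
  have h4 : (n + 1 - 1) * k = n * k := by simp
  omega

include hk ha in
lemma A_strictMonoOn : StrictMonoOn (A k a) (Set.Ici 1) := by
  intro i hi j hj hij
  simp only [Set.mem_Ici] at hi hj
  clear hj
  induction j with
  | zero => omega
  | succ j ih =>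
    rcases Nat.lt_or_ge i j with h | h
    · exact (ih h).trans (A_lt_succ k a hk ha j (by omega))
    · have : i = j := by omega
      subst this
      exact A_lt_succ k a hk ha i hi

include hk ha in
lemma A_ne_B (n i : ℕ) (hn : 1 ≤ n) (hi : 1 ≤ i) : A k a n ≠ B k a i := by
  rcases Nat.lt_or_ge (n * k) i with h | h
  · exact (B_P k a i hi).2.2 n hn h
  · have : B k a i ≤ B k a (n * k) := B_le_mono k a i (n * k) hi h
    have := B_lt_A k a hk ha n hn
    omega

omit hk ha in
lemma covered (m : ℕ) (hm : 1 ≤ m) (hA : ¬ ∃ n, 1 ≤ n ∧ A k a n = m) :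
    ∃ i, 1 ≤ i ∧ B k a i = m := by
  by_contra hB
  push_neg at hA hB
  have hall : ∀ i, 1 ≤ i → B k a i ≤ m := fun i hi =>
    B_min k a i m hi hm (fun j hj _ => hB j hj) (fun n hn _ => hA n hn)
  have := le_B k a (m + 1) (by omega)
  have := hall (m + 1) (by omega)
  omega

end Stmt2Aux

/-- `A` and `B` (indexed from 1) are complementary strictly increasing sequences
of positive integers: every positive integer lies in exactly one of their ranges. -/
def CompPair (A B : ℕ → ℕ) : Prop :=
  StrictMonoOn A (Set.Ici 1) ∧ StrictMonoOn B (Set.Ici 1) ∧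
  (∀ n, 1 ≤ n → 1 ≤ A n) ∧ (∀ n, 1 ≤ n → 1 ≤ B n) ∧
  ∀ m, 1 ≤ m →
    ((∃ n, 1 ≤ n ∧ A n = m) ∧ ¬(∃ n, 1 ≤ n ∧ B n = m)) ∨
    (¬(∃ n, 1 ≤ n ∧ A n = m) ∧ (∃ n, 1 ≤ n ∧ B n = m))

/-- `(A, B)` is the anti-recurrence pair for the positive linear form `a` of dimension `k`:
`A n = Σ_{j=1}^k a_j * B_{(n-1)k+j}` for all `n ≥ 1`. -/
def AntiRec (k : ℕ) (a : Fin k → ℕ) (A B : ℕ → ℕ) : Prop :=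
  CompPair A B ∧
  ∀ n, 1 ≤ n → A n = ∑ j : Fin k, a j * B ((n - 1) * k + (j : ℕ) + 1)

namespace Stmt2Aux

variable (k : ℕ) (a : Fin k → ℕ) (hk : 1 < k) (ha : ∀ j, 0 < a j)

include hk ha in
lemma antiRec_greedy : AntiRec k a (A k a) (B k a) := by
  refine ⟨⟨A_strictMonoOn k a hk ha, B_strictMonoOn k a, fun n hn => A_pos k a hk ha n hn,
    fun n hn => B_pos k a n hn, ?_⟩, fun n hn => rfl⟩
  intro m hm
  by_cases h : ∃ n, 1 ≤ n ∧ A k a n = m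
  · left
    refine ⟨h, ?_⟩
    rintro ⟨i, hi, rfl⟩
    obtain ⟨n, hn, hAn⟩ := h
    exact A_ne_B k a hk ha n i hn hi hAn
  · right
    exact ⟨h, covered k a m hm h⟩

include hk ha in
lemma uniqueB (A' B' : ℕ → ℕ) (h : AntiRec k a A' B') :
    ∀ i, 1 ≤ i → B' i = B k a i := by
  obtain ⟨⟨hA'm, hB'm, hA'p, hB'p, hcomp⟩, hrec⟩ := h
  have hB'le : ∀ i j, 1 ≤ i → i ≤ j → B' i ≤ B' j := by
    intro i j hi hij
    rcases Nat.eq_or_lt_of_le hij with h | h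
    · rw [h]
    · exact (hB'm (Set.mem_Ici.2 hi) (Set.mem_Ici.2 (by omega)) h).le
  intro i
  induction i using Nat.strong_induction_on with
  | _ i ih =>
  intro hi
  have hAeq : ∀ n, 1 ≤ n → n * k < i → A' n = A k a n := by
    intro n hn hnk
    rw [hrec n hn]
    unfold A S
    refine Finset.sum_congr rfl fun j _ => ?_
    have hidx := idx_le k n hn j
    rw [ih ((n-1)*k + (j:ℕ) + 1) (by omega) (by omega)]
  have hdisj : ∀ n i', 1 ≤ n → 1 ≤ i' → A' n ≠ B' i' := by
    intro n i' hn hi' hE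
    rcases hcomp (A' n) (hA'p n hn) with ⟨_, hnB⟩ | ⟨hnA, _⟩
    · exact hnB ⟨i', hi', hE.symm⟩
    · exact hnA ⟨n, hn, rfl⟩
  have hle : B k a i ≤ B' i := by
    refine B_min k a i (B' i) hi (hB'p i hi) ?_ ?_
    · intro j hj hji
      rw [← ih j hji hj]
      exact ne_of_lt (hB'm (Set.mem_Ici.2 hj) (Set.mem_Ici.2 hi) hji)
    · intro n hn hnk
      rw [← hAeq n hn hnk]
      exact hdisj n i hn hi
  rcases hcomp (B k a i) (B_pos k a i hi) with ⟨⟨n, hn, hAn⟩, _⟩ | ⟨_, ⟨l, hl, hBl⟩⟩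
  · exfalso
    rcases Nat.lt_or_ge (n * k) i with hcase | hcase
    · exact (B_P k a i hi).2.2 n hn hcase ((hAeq n hn hcase) ▸ hAn)
    · have h1 : B' (n * k) < A' n := by
        rw [hrec n hn]
        exact S_gt k a hk ha B' hB'p n hn
      have h2 : B' i ≤ B' (n * k) := hB'le i (n * k) hi hcase
      omega
  · have hil : i ≤ l := by
      by_contra hlt
      push_neg at hlt
      exact (B_P k a i hi).2.1 l hl hlt ((ih l hlt hl) ▸ hBl)
    have h2 : B' i ≤ B' l := hB'le i l hi hil
    omega

end Stmt2Aux

/-- A positive linear form determines a unique anti-recurrence pair. -/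
theorem stmt2 (k : ℕ) (hk : 1 < k) (a : Fin k → ℕ) (ha : ∀ j, 0 < a j) :
    ∃ A B : ℕ → ℕ, AntiRec k a A B ∧
      ∀ A' B' : ℕ → ℕ, AntiRec k a A' B' →
        ∀ n, 1 ≤ n → A' n = A n ∧ B' n = B n := by
  refine ⟨Stmt2Aux.A k a, Stmt2Aux.B k a, Stmt2Aux.antiRec_greedy k a hk ha, ?_⟩
  intro A' B' h' n hn
  have hB := Stmt2Aux.uniqueB k a hk ha A' B' h'
  refine ⟨?_, hB n hn⟩
  rw [h'.2 n hn]
  unfold Stmt2Aux.A Stmt2Aux.S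
  refine Finset.sum_congr rfl fun j _ => ?_
  rw [hB ((n-1)*k + (j:ℕ) + 1) (by omega)]
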